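/- The updated worst-case service is a worst-case service: if ψ: U↑b → U satisfies ψ(x) ≤ x, and q ≥ d ≥ p where p := sup_{x∈U|q} ψ_1(x), then ψ̇ defined by ψ̇_j(x̊) := ψ_{j+1}(x) ∸ d (with x ∈ U|q corresponding to x̊ ∈ U↑(q−d) via x_1 = q, x_{j+1} = x̊_j + d for j ≥ 1) satisfies ψ̇(x̊) ≤ x̊ for all x̊ ∈ U↑(q−d), and each ψ̇(x̊) is a cumulative vector. -/

import Mathlib

/-- A cumulative vector: a nondecreasing sequence `ℕ → ℕ∞` starting at `0`. -/
def Cumulative (x : ℕ → ℕ∞) : Prop := x 0 = 0 ∧ Monotone x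

/-- `U↑b`: cumulative vectors whose first entry is at least `b`. -/
def UUp (b : ℕ) : Set (ℕ → ℕ∞) := {x | Cumulative x ∧ (b : ℕ∞) ≤ x 1}

/-- `U|q`: cumulative vectors whose first entry is exactly `q`. -/
def UAt (q : ℕ) : Set (ℕ → ℕ∞) := {x | Cumulative x ∧ x 1 = (q : ℕ∞)}

/-- The arrival vector `x ∈ U|q` corresponding to the next-slot vector `x̊`:
`x_0 = 0`, `x_1 = q`, and `x_{j+1} = x̊_j + d` for `j ≥ 1`. -/
def liftArr (q d : ℕ) (x' : ℕ → ℕ∞) : ℕ → ℕ∞ := fun k =>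
  if k = 0 then 0 else if k = 1 then (q : ℕ∞) else x' (k - 1) + (d : ℕ∞)

/-- The updated worst-case service is a worst-case service: if `ψ(x) ≤ x` on
`U↑b` and `q ≥ d ≥ p`, then `ψ̇_j(x̊) := ψ_{j+1}(x) ∸ d` satisfies `ψ̇(x̊) ≤ x̊`
and is cumulative. -/
theorem updated_worst_case (b : ℕ) (ψ : (ℕ → ℕ∞) → (ℕ → ℕ∞))
    (hψ : ∀ x ∈ UUp b, ∀ j, ψ x j ≤ x j)
    (hψcum : ∀ x ∈ UUp b, Cumulative (ψ x))
    (q d : ℕ) (hbq : b ≤ q) (hdq : d ≤ q)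
    (hpd : (⨆ x ∈ UAt q, ψ x 1) ≤ (d : ℕ∞)) :
    ∀ x' ∈ UUp (q - d),
      (∀ j, ψ (liftArr q d x') (j + 1) - (d : ℕ∞) ≤ x' j) ∧
      Cumulative (fun j => ψ (liftArr q d x') (j + 1) - (d : ℕ∞)) := by
  intro x' hx'
  obtain ⟨⟨hx'0, hx'mono⟩, hx'1⟩ := hx'
  set x := liftArr q d x' with hx
  have hx0 : x 0 = 0 := rfl
  have hx1 : x 1 = (q : ℕ∞) := rfl
  have hxsucc : ∀ k, 1 ≤ k → x (k + 1) = x' k + (d : ℕ∞) := by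
    intro k hk
    simp only [hx, liftArr]
    rw [if_neg (by omega), if_neg (by omega)]
    simp
  have hxmono : Monotone x := by
    apply monotone_nat_of_le_succ
    intro k
    match k with
    | 0 => rw [hx0]; exact zero_le
    | 1 =>
        rw [hx1, hxsucc 1 le_rfl]
        calc (q : ℕ∞) = ((q - d : ℕ) : ℕ∞) + (d : ℕ∞) := by
              rw [← Nat.cast_add, Nat.sub_add_cancel hdq]
          _ ≤ x' 1 + (d : ℕ∞) := add_le_add_left hx'1 _
    | (k + 2) =>
        rw [hxsucc (k+1) (by omega), hxsucc (k+2) (by omega)]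
        exact add_le_add_left (hx'mono (by omega)) _
  have hxcum : Cumulative x := ⟨hx0, hxmono⟩
  have hxUUp : x ∈ UUp b := ⟨hxcum, by rw [hx1]; exact_mod_cast hbq⟩
  have hxUAt : x ∈ UAt q := ⟨hxcum, hx1⟩
  have hψ1 : ψ x 1 ≤ (d : ℕ∞) :=
    le_trans (le_iSup₂ (f := fun y (_ : y ∈ UAt q) => ψ y 1) x hxUAt) hpd
  have h0 : ψ x 1 - (d : ℕ∞) = 0 := tsub_eq_zero_of_le hψ1
  refine ⟨?_, ?_, ?_⟩
  · intro j
    match j with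
    | 0 => rw [h0, hx'0]
    | (j + 1) =>
        rw [tsub_le_iff_right, ← hxsucc (j+1) (by omega)]
        exact hψ x hxUUp (j + 2)
  · exact h0
  · exact fun i j hij => tsub_le_tsub_right ((hψcum x hxUUp).2 (by omega)) _
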